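/- Fix τ ∈ (0, 1]. Suppose 0 < γ₁ < γ₂ < ∞ and λ₁, λ₂ > 0 satisfy the fixed-point equations λⱼ² · ∫ 1/(s + λⱼ)² dMP(γⱼ)(s) = τ for j = 1, 2. Then ∫ s/(s + λ₁)² dMP(γ₁)(s) < ∫ s/(s + λ₂)² dMP(γ₂)(s). -/

import Mathlib

open MeasureTheory


/-- The Marchenko–Pastur measure with aspect ratio `γ`: a point mass of weight
`max 0 (1 - 1/γ)` at `0` plus the absolutely continuous part with density
`s ↦ √((b - s)(s - a)) / (2πγs)` on `[a, b]`, where `a = (1 - √γ)²`, `b = (1 + √γ)²`. -/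
noncomputable def MP (γ : ℝ) : Measure ℝ :=
  ENNReal.ofReal (max 0 (1 - 1 / γ)) • Measure.dirac 0 +
    volume.withDensity
      (Set.indicator (Set.Icc ((1 - Real.sqrt γ) ^ 2) ((1 + Real.sqrt γ) ^ 2))
        (fun s => ENNReal.ofReal
          (Real.sqrt (((1 + Real.sqrt γ) ^ 2 - s) * (s - (1 - Real.sqrt γ) ^ 2)) /
            (2 * Real.pi * γ * s))))

open Set Real


lemma sqrt_kernel_integrableOn {a b c : ℝ} (ha : 0 ≤ a) (hab : a < b) (hc : 0 ≤ c) :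
    IntegrableOn (fun s => Real.sqrt ((b - s) * (s - a)) / (s + c)) (Set.Ioc a b) := by
  have hb0 : 0 < b := lt_of_le_of_lt ha hab
  have hdom : IntegrableOn (fun s => Real.sqrt b * s ^ (-(1/2) : ℝ)) (Set.Ioc a b) := by
    have h1 : IntervalIntegrable (fun s : ℝ => s ^ (-(1/2) : ℝ)) volume a b :=
      intervalIntegral.intervalIntegrable_rpow' (by norm_num)
    exact (intervalIntegrable_iff_integrableOn_Ioc_of_le hab.le).mp (h1.const_mul _)
  refine MeasureTheory.Integrable.mono hdom ?_ ?_
  · exact ((Real.continuous_sqrt.measurable.comp ((measurable_const.sub measurable_id).mul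
      (measurable_id.sub measurable_const))).div
      (measurable_id.add measurable_const)).aestronglyMeasurable
  · filter_upwards [ae_restrict_mem measurableSet_Ioc] with s hs
    have hs0 : 0 < s := lt_of_le_of_lt ha hs.1
    have hsc : 0 < s + c := by linarith
    have hnn : 0 ≤ Real.sqrt ((b - s) * (s - a)) / (s + c) :=
      div_nonneg (Real.sqrt_nonneg _) hsc.le
    have hb1 : Real.sqrt ((b - s) * (s - a)) ≤ Real.sqrt b * Real.sqrt s := by
      rw [← Real.sqrt_mul hb0.le]
      apply Real.sqrt_le_sqrt
      nlinarith [hs.1, hs.2]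
    have hss : Real.sqrt s / s = s ^ (-(1/2) : ℝ) := by
      rw [Real.rpow_neg hs0.le, ← Real.sqrt_eq_rpow]
      rw [eq_comm, inv_eq_iff_eq_inv, eq_comm, inv_div]
      rw [Real.div_sqrt]
    have key : Real.sqrt ((b - s) * (s - a)) / (s + c) ≤ Real.sqrt b * s ^ (-(1/2) : ℝ) := by
      calc Real.sqrt ((b - s) * (s - a)) / (s + c)
          ≤ Real.sqrt b * Real.sqrt s / s := div_le_div₀ (by positivity) hb1 hs0 (by linarith)
        _ = Real.sqrt b * (Real.sqrt s / s) := by ring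
        _ = Real.sqrt b * s ^ (-(1/2) : ℝ) := by rw [hss]
    rw [Real.norm_eq_abs, Real.norm_eq_abs, abs_of_nonneg hnn, abs_of_nonneg (by positivity)]
    exact key

set_option maxHeartbeats 1000000 in
lemma sqrt_integral {a b c : ℝ} (ha : 0 ≤ a) (hab : a < b) (hc : 0 ≤ c) :
    ∫ s in a..b, Real.sqrt ((b - s) * (s - a)) / (s + c)
      = Real.pi * ((a + b) / 2 + c - Real.sqrt ((a + c) * (b + c))) := by
  have hb0 : 0 < b := lt_of_le_of_lt ha hab
  have hba : (0:ℝ) < b - a := by linarith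
  have hbc : (0:ℝ) < b + c := by linarith
  have hP0 : (0:ℝ) ≤ (a + c) * (b + c) := mul_nonneg (by linarith) (by linarith)
  set F : ℝ → ℝ := fun s =>
    Real.sqrt ((b - s) * (s - a)) + ((a + b) / 2 + c) * Real.arcsin ((2 * s - a - b) / (b - a))
      + Real.sqrt ((a + c) * (b + c)) *
        Real.arcsin ((2 * ((a + c) * (b + c)) - (a + b + 2 * c) * (s + c)) / ((b - a) * (s + c)))
    with hF
  have key : ∀ x ∈ Set.Ioo a b, HasDerivAt F (Real.sqrt ((b - x) * (x - a)) / (x + c)) x := by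
    intro x hx
    have hxa : a < x := hx.1
    have hxb : x < b := hx.2
    have hx0 : 0 < x := lt_of_le_of_lt ha hxa
    have hxc : 0 < x + c := by linarith
    have hu : 0 < (b - x) * (x - a) := mul_pos (by linarith) (by linarith)
    set r := Real.sqrt ((b - x) * (x - a)) with hrdef
    have hr : 0 < r := Real.sqrt_pos.mpr hu
    have hr2 : r ^ 2 = (b - x) * (x - a) := Real.sq_sqrt hu.le
    set p := Real.sqrt ((a + c) * (b + c)) with hpdef
    -- term 1
    have h1 : HasDerivAt (fun s => Real.sqrt ((b - s) * (s - a))) ((a + b - 2 * x) / (2 * r)) x := by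
      have hpoly : HasDerivAt (fun s : ℝ => (b - s) * (s - a)) (a + b - 2 * x) x := by
        have := ((hasDerivAt_id x).const_sub b).mul ((hasDerivAt_id x).sub_const a)
        convert this using 1 <;> try rfl
        simp; ring
      have := (Real.hasDerivAt_sqrt (ne_of_gt hu)).comp x hpoly
      convert this using 1 <;> try rfl
      rw [← hrdef]
      field_simp
    -- term 2
    have hψd : HasDerivAt (fun s : ℝ => (2 * s - a - b) / (b - a)) (2 / (b - a)) x := by
      have : HasDerivAt (fun s : ℝ => 2 * s - a - b) 2 x := by
        simpa using (((hasDerivAt_id x).const_mul 2).sub_const a).sub_const b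
      simpa using this.div_const (b - a)
    have hψsq : 1 - ((2 * x - a - b) / (b - a)) ^ 2 = (2 * r / (b - a)) ^ 2 := by
      rw [div_pow, div_pow, mul_pow, hr2]
      field_simp
      ring
    have hψpos : 0 < (2 * r / (b - a)) ^ 2 := pow_pos (by positivity) 2
    have hψlt : ((2 * x - a - b) / (b - a)) ^ 2 < 1 := by
      nlinarith [hψsq, hψpos]
    have hψne1 : (2 * x - a - b) / (b - a) ≠ 1 := by
      intro h; rw [h] at hψlt; norm_num at hψlt
    have hψnem1 : (2 * x - a - b) / (b - a) ≠ -1 := by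
      intro h; rw [h] at hψlt; norm_num at hψlt
    have h2 : HasDerivAt (fun s => ((a + b) / 2 + c) * Real.arcsin ((2 * s - a - b) / (b - a)))
        (((a + b) / 2 + c) / r) x := by
      have := ((Real.hasDerivAt_arcsin hψnem1 hψne1).comp x hψd).const_mul ((a + b) / 2 + c)
      convert this using 1 <;> try rfl
      rw [hψsq, Real.sqrt_sq (by positivity)]
      field_simp
    -- term 3
    have h3 : HasDerivAt (fun s => p *
        Real.arcsin ((2 * ((a + c) * (b + c)) - (a + b + 2 * c) * (s + c)) / ((b - a) * (s + c))))
        (-((a + c) * (b + c)) / ((x + c) * r)) x := by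
      rcases eq_or_lt_of_le hP0 with hP | hP
      · have hsq : p = 0 := by rw [hpdef, ← hP, Real.sqrt_zero]
        rw [hsq, ← hP]
        simp only [zero_mul, neg_zero, zero_div]
        exact hasDerivAt_const x 0
      · have hφd : HasDerivAt
            (fun s : ℝ => (2 * ((a + c) * (b + c)) - (a + b + 2 * c) * (s + c)) / ((b - a) * (s + c)))
            (-(2 * ((a + c) * (b + c))) / ((b - a) * (x + c) ^ 2)) x := by
          have hnum : HasDerivAt (fun s : ℝ => 2 * ((a + c) * (b + c)) - (a + b + 2 * c) * (s + c))
              (-(a + b + 2 * c)) x := by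
            simpa using (((hasDerivAt_id x).add_const c).const_mul (a + b + 2 * c)).const_sub
              (2 * ((a + c) * (b + c)))
          have hden : HasDerivAt (fun s : ℝ => (b - a) * (s + c)) (b - a) x := by
            simpa using ((hasDerivAt_id x).add_const c).const_mul (b - a)
          have := hnum.div hden (by positivity)
          convert this using 1 <;> try rfl
          field_simp
          ring
        have hp : 0 < p := Real.sqrt_pos.mpr hP
        have hp2 : p ^ 2 = (a + c) * (b + c) := Real.sq_sqrt hP0
        have hφsq : 1 - ((2 * ((a + c) * (b + c)) - (a + b + 2 * c) * (x + c)) / ((b - a) * (x + c))) ^ 2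
            = (2 * p * r / ((b - a) * (x + c))) ^ 2 := by
          rw [div_pow, div_pow, mul_pow, mul_pow, mul_pow, hp2, hr2]
          field_simp
          ring
        have hφpos : 0 < (2 * p * r / ((b - a) * (x + c))) ^ 2 := pow_pos (by positivity) 2
        have hφlt : ((2 * ((a + c) * (b + c)) - (a + b + 2 * c) * (x + c)) / ((b - a) * (x + c))) ^ 2 < 1 := by
          nlinarith [hφsq, hφpos]
        have hφne1 : (2 * ((a + c) * (b + c)) - (a + b + 2 * c) * (x + c)) / ((b - a) * (x + c)) ≠ 1 := by
          intro h; rw [h] at hφlt; norm_num at hφlt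
        have hφnem1 : (2 * ((a + c) * (b + c)) - (a + b + 2 * c) * (x + c)) / ((b - a) * (x + c)) ≠ -1 := by
          intro h; rw [h] at hφlt; norm_num at hφlt
        have := ((Real.hasDerivAt_arcsin hφnem1 hφne1).comp x hφd).const_mul p
        convert this using 1 <;> try rfl
        rw [hφsq, Real.sqrt_sq (by positivity)]
        field_simp
    have hsum := (h1.add h2).add h3
    convert hsum using 1 <;> try rfl
    field_simp
    linear_combination 2 * hr2
  have hcont : ContinuousOn F (Set.Icc a b) := by
    rw [hF]
    refine ContinuousOn.add (ContinuousOn.add ?_ ?_) ?_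
    · exact (Real.continuous_sqrt.comp (by continuity)).continuousOn
    · exact (continuous_const.mul (Real.continuous_arcsin.comp (by continuity))).continuousOn
    · rcases eq_or_lt_of_le hP0 with hP | hP
      · have h0 : Real.sqrt ((a + c) * (b + c)) = 0 := by rw [← hP, Real.sqrt_zero]
        simp only [h0, zero_mul]
        exact continuousOn_const
      · have hac : 0 < a + c := by
          rcases mul_pos_iff.mp hP with ⟨h1, _⟩ | ⟨_, h2⟩
          · exact h1
          · linarith
        refine ContinuousOn.mul continuousOn_const ?_
        refine Real.continuous_arcsin.comp_continuousOn ?_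
        refine ContinuousOn.div (by fun_prop) (by fun_prop) ?_
        intro s hs
        have : 0 < s + c := by linarith [hs.1]
        exact ne_of_gt (mul_pos hba this)
  have hint : IntervalIntegrable (fun s => Real.sqrt ((b - s) * (s - a)) / (s + c)) volume a b :=
    (intervalIntegrable_iff_integrableOn_Ioc_of_le hab.le).mpr (sqrt_kernel_integrableOn ha hab hc)
  rw [intervalIntegral.integral_eq_sub_of_hasDeriv_right_of_le hab.le hcont
      (fun x hx => (key x hx).hasDerivWithinAt) hint]
  rw [hF]
  simp only []
  have e1 : Real.sqrt ((b - b) * (b - a)) = 0 := by simp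
  have e2 : Real.sqrt ((b - a) * (a - a)) = 0 := by simp
  have e3 : (2 * b - a - b) / (b - a) = 1 := by
    rw [show 2 * b - a - b = b - a by ring]; exact div_self hba.ne'
  have e4 : (2 * a - a - b) / (b - a) = -1 := by
    rw [show 2 * a - a - b = -(b - a) by ring, neg_div, div_self hba.ne']
  have e5 : (2 * ((a + c) * (b + c)) - (a + b + 2 * c) * (b + c)) / ((b - a) * (b + c)) = -1 := by
    rw [show 2 * ((a + c) * (b + c)) - (a + b + 2 * c) * (b + c) = -((b - a) * (b + c)) by ring,
      neg_div, div_self (ne_of_gt (mul_pos hba hbc))]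
  have e6 : Real.sqrt ((a + c) * (b + c)) *
      Real.arcsin ((2 * ((a + c) * (b + c)) - (a + b + 2 * c) * (a + c)) / ((b - a) * (a + c)))
      = Real.sqrt ((a + c) * (b + c)) * (Real.pi / 2) := by
    rcases eq_or_lt_of_le hP0 with hP | hP
    · have h0 : Real.sqrt ((a + c) * (b + c)) = 0 := by rw [← hP, Real.sqrt_zero]
      rw [h0, zero_mul, zero_mul]
    · have hac : 0 < a + c := by
        rcases mul_pos_iff.mp hP with ⟨h1, _⟩ | ⟨_, h2⟩
        · exact h1
        · linarith
      rw [show 2 * ((a + c) * (b + c)) - (a + b + 2 * c) * (a + c) = (b - a) * (a + c) by ring,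
        div_self (ne_of_gt (mul_pos hba hac)), Real.arcsin_one]
  rw [e1, e2, e3, e4, e5, e6, Real.arcsin_one, Real.arcsin_neg_one]
  ring

open scoped NNReal ENNReal

lemma MP_core (γ : ℝ) (hγ : 0 < γ) (g : ℝ → ℝ) (hg : Measurable g) (C : ℝ)
    (hbd : ∀ s ∈ Set.Icc ((1 - Real.sqrt γ) ^ 2) ((1 + Real.sqrt γ) ^ 2), |g s| ≤ C) :
    Integrable g (MP γ) ∧
    ∫ s, g s ∂(MP γ) = max 0 (1 - 1 / γ) * g 0 +
      ∫ s in ((1 - Real.sqrt γ) ^ 2)..((1 + Real.sqrt γ) ^ 2),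
        g s * (Real.sqrt (((1 + Real.sqrt γ) ^ 2 - s) * (s - (1 - Real.sqrt γ) ^ 2)) /
          (2 * Real.pi * γ * s)) := by
  set A := (1 - Real.sqrt γ) ^ 2 with hAdef
  set B := (1 + Real.sqrt γ) ^ 2 with hBdef
  set ρ : ℝ → ℝ := fun s => Real.sqrt ((B - s) * (s - A)) / (2 * Real.pi * γ * s) with hρdef
  have hsg : 0 < Real.sqrt γ := Real.sqrt_pos.mpr hγ
  have hA0 : 0 ≤ A := sq_nonneg _
  have hAB : A < B := by rw [hAdef, hBdef]; nlinarith
  have hC0 : 0 ≤ C := le_trans (abs_nonneg _) (hbd A ⟨le_rfl, hAB.le⟩)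
  have hπ : (0:ℝ) < Real.pi := Real.pi_pos
  have hρmeas : Measurable ρ := by
    apply Measurable.div
    · exact Real.continuous_sqrt.measurable.comp
        ((measurable_const.sub measurable_id).mul (measurable_id.sub measurable_const))
    · exact measurable_const.mul measurable_id
  have hρnn : ∀ s, 0 ≤ ρ s := fun s => by
    rcases le_or_gt 0 s with h | h
    · exact div_nonneg (Real.sqrt_nonneg _) (by positivity)
    · have h0 : Real.sqrt ((B - s) * (s - A)) = 0 := by
        rw [Real.sqrt_eq_zero']
        nlinarith
      rw [hρdef]
      simp only [h0, zero_div, le_refl]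
  -- integrability of g * ρ on Ioc
  have hIoc : IntegrableOn (fun s => g s * ρ s) (Set.Ioc A B) := by
    have hker := (sqrt_kernel_integrableOn hA0 hAB le_rfl).const_mul (C / (2 * Real.pi * γ))
    refine MeasureTheory.Integrable.mono hker ((hg.mul hρmeas).aestronglyMeasurable) ?_
    filter_upwards [ae_restrict_mem measurableSet_Ioc] with s hs
    have hs0 : 0 < s := lt_of_le_of_lt hA0 hs.1
    have heq : C * ρ s = C / (2 * Real.pi * γ) * (Real.sqrt ((B - s) * (s - A)) / (s + 0)) := by
      rw [hρdef]
      field_simp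
      ring
    rw [Real.norm_eq_abs, Real.norm_eq_abs, abs_mul]
    calc |g s| * |ρ s| ≤ C * |ρ s| := by
          apply mul_le_mul_of_nonneg_right (hbd s ⟨hs.1.le, hs.2⟩) (abs_nonneg _)
      _ = C * ρ s := by rw [abs_of_nonneg (hρnn s)]
      _ ≤ |C / (2 * Real.pi * γ) * (Real.sqrt ((B - s) * (s - A)) / (s + 0))| := by
          rw [heq]; exact le_abs_self _
  have hIcc : IntegrableOn (fun s => g s * ρ s) (Set.Icc A B) :=
    (integrableOn_Icc_iff_integrableOn_Ioc).mpr hIoc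
  -- dirac part integrability
  have hdirac : Integrable g (ENNReal.ofReal (max 0 (1 - 1 / γ)) • Measure.dirac 0) := by
    refine Integrable.smul_measure ?_ ENNReal.ofReal_ne_top
    refine (integrable_const (g 0)).congr ?_
    rw [Filter.EventuallyEq, ae_dirac_eq, Filter.eventually_pure]
  -- density measurability and finiteness
  have hdens_meas : Measurable (Set.indicator (Set.Icc A B) (fun s => ENNReal.ofReal (ρ s))) :=
    (ENNReal.measurable_ofReal.comp hρmeas).indicator measurableSet_Icc
  have hdens_fin : ∀ᵐ x ∂(volume : Measure ℝ),
      Set.indicator (Set.Icc A B) (fun s => ENNReal.ofReal (ρ s)) x < ⊤ := by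
    refine Filter.Eventually.of_forall (fun x => ?_)
    by_cases hx : x ∈ Set.Icc A B
    · rw [Set.indicator_of_mem hx]; exact ENNReal.ofReal_lt_top
    · rw [Set.indicator_of_notMem hx]; exact ENNReal.zero_lt_top
  have htoReal : ∀ x, ((Set.indicator (Set.Icc A B) (fun s => ENNReal.ofReal (ρ s)) x).toReal)
      = Set.indicator (Set.Icc A B) ρ x := by
    intro x
    by_cases hx : x ∈ Set.Icc A B
    · rw [Set.indicator_of_mem hx, Set.indicator_of_mem hx, ENNReal.toReal_ofReal (hρnn x)]
    · rw [Set.indicator_of_notMem hx, Set.indicator_of_notMem hx]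
      simp
  have hwd : Integrable g (volume.withDensity
      (Set.indicator (Set.Icc A B) (fun s => ENNReal.ofReal (ρ s)))) := by
    rw [integrable_withDensity_iff hdens_meas hdens_fin]
    have : (fun x => g x * (Set.indicator (Set.Icc A B) (fun s => ENNReal.ofReal (ρ s)) x).toReal)
        = Set.indicator (Set.Icc A B) (fun x => g x * ρ x) := by
      funext x
      rw [htoReal x, ← Set.indicator_mul_right]
    rw [this, integrable_indicator_iff measurableSet_Icc]
    exact hIcc
  constructor
  · rw [MP]; exact hdirac.add_measure hwd
  · rw [MP, integral_add_measure hdirac hwd, integral_smul_measure, integral_dirac,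
      ENNReal.toReal_ofReal (le_max_left 0 (1 - 1/γ))]
    rw [smul_eq_mul]
    congr 1
    -- withDensity part
    have hnn : (Set.indicator (Set.Icc A B) (fun s => ENNReal.ofReal (ρ s)))
        = fun s => ((Set.indicator (Set.Icc A B) (fun s => (ρ s).toNNReal) s : ℝ≥0) : ℝ≥0∞) := by
      funext x
      rw [ENNReal.coe_indicator]
      rfl
    have hm : Measurable (Set.indicator (Set.Icc A B) (fun s => (ρ s).toNNReal)) :=
      (hρmeas.real_toNNReal).indicator measurableSet_Icc
    rw [hnn, integral_withDensity_eq_integral_smul hm g]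
    have : (fun x => (Set.indicator (Set.Icc A B) (fun s => (ρ s).toNNReal) x) • g x)
        = Set.indicator (Set.Icc A B) (fun x => g x * ρ x) := by
      funext x
      by_cases hx : x ∈ Set.Icc A B
      · rw [Set.indicator_of_mem hx, Set.indicator_of_mem hx]
        show ((ρ x).toNNReal : ℝ) * g x = g x * ρ x
        rw [Real.coe_toNNReal _ (hρnn x), mul_comm]
      · rw [Set.indicator_of_notMem hx, Set.indicator_of_notMem hx, zero_smul]
    rw [this, integral_indicator measurableSet_Icc,
      ← MeasureTheory.Measure.restrict_congr_set MeasureTheory.Ioc_ae_eq_Icc,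
      ← intervalIntegral.integral_of_le hAB.le]

noncomputable def Vf (γ lam : ℝ) : ℝ :=
  (Real.sqrt ((lam + 1 - γ) ^ 2 + 4 * γ * lam) - (lam + 1 - γ)) / (2 * γ * lam)

lemma stieltjes (γ lam : ℝ) (hγ : 0 < γ) (hlam : 0 < lam) :
    ∫ s, 1 / (s + lam) ∂(MP γ) = Vf γ lam := by
  set sg := Real.sqrt γ with hsgdef
  set A := (1 - sg) ^ 2 with hAdef
  set B := (1 + sg) ^ 2 with hBdef
  have hsg : 0 < sg := Real.sqrt_pos.mpr hγ
  have hsg2 : sg ^ 2 = γ := Real.sq_sqrt hγ.le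
  have hA0 : 0 ≤ A := sq_nonneg _
  have hAB : A < B := by rw [hAdef, hBdef]; nlinarith
  have hπ : (0:ℝ) < Real.pi := Real.pi_pos
  have hmeas : Measurable (fun s : ℝ => 1 / (s + lam)) :=
    measurable_const.div (measurable_id.add measurable_const)
  have hbd : ∀ s ∈ Set.Icc A B, |1 / (s + lam)| ≤ 1 / lam := by
    intro s hs
    have hs0 : 0 ≤ s := le_trans hA0 hs.1
    rw [abs_of_nonneg (by positivity)]
    apply div_le_div_of_nonneg_left zero_le_one hlam (by linarith)
  obtain ⟨hint, heq⟩ := MP_core γ hγ (fun s => 1 / (s + lam)) hmeas (1 / lam) hbd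
  rw [heq]
  have hsplit : ∀ s ∈ Set.Ioc A B,
      (1 / (s + lam)) * (Real.sqrt ((B - s) * (s - A)) / (2 * Real.pi * γ * s))
      = 1 / (2 * Real.pi * γ * lam) * (Real.sqrt ((B - s) * (s - A)) / (s + 0))
        - 1 / (2 * Real.pi * γ * lam) * (Real.sqrt ((B - s) * (s - A)) / (s + lam)) := by
    intro s hs
    have hs0 : 0 < s := lt_of_le_of_lt hA0 hs.1
    have hslam : 0 < s + lam := by linarith
    field_simp
    ring
  rw [intervalIntegral.integral_of_le hAB.le,
    setIntegral_congr_fun measurableSet_Ioc hsplit, integral_sub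
      (((sqrt_kernel_integrableOn hA0 hAB le_rfl).const_mul _))
      (((sqrt_kernel_integrableOn hA0 hAB hlam.le).const_mul _)),
    integral_const_mul, integral_const_mul,
    ← intervalIntegral.integral_of_le hAB.le, ← intervalIntegral.integral_of_le hAB.le,
    sqrt_integral hA0 hAB le_rfl, sqrt_integral hA0 hAB hlam.le]
  have hABsum : A + B = 2 * (1 + γ) := by
    rw [hAdef, hBdef]; linear_combination 2 * hsg2
  have hABprod : (A + 0) * (B + 0) = (1 - γ) ^ 2 := by
    rw [hAdef, hBdef]; linear_combination (sg ^ 2 + γ - 2) * hsg2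
  have hABlam : (A + lam) * (B + lam) = (lam + 1 - γ) ^ 2 + 4 * γ * lam := by
    linear_combination hABprod + lam * hABsum
  rw [hABprod, hABlam, Real.sqrt_sq_eq_abs]
  rw [Vf]
  rcases le_or_gt γ 1 with hγ1 | hγ1
  · rw [max_eq_left (by
      have : 1 ≤ 1 / γ := (le_div_iff₀ hγ).mpr (by linarith)
      linarith), abs_of_nonneg (by linarith)]
    field_simp
    ring
  · rw [max_eq_right (by
      have : 1 / γ ≤ 1 := (div_le_one hγ).mpr (by linarith)
      linarith), abs_of_neg (by linarith)]
    field_simp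
    ring

lemma MP_ae_nonneg (γ : ℝ) (hγ : 0 < γ) : ∀ᵐ s ∂(MP γ), 0 ≤ s := by
  rw [MeasureTheory.ae_iff]
  have hset : {s : ℝ | ¬ 0 ≤ s} = Set.Iio 0 := by ext s; simp
  rw [hset, MP, MeasureTheory.Measure.add_apply, MeasureTheory.Measure.smul_apply,
    MeasureTheory.Measure.dirac_apply' _ measurableSet_Iio,
    MeasureTheory.withDensity_apply _ measurableSet_Iio]
  have h1 : Set.indicator (Set.Iio (0:ℝ)) (1 : ℝ → ℝ≥0∞) 0 = 0 := by
    rw [Set.indicator_of_notMem]; simp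
  rw [h1]
  have h2 : ∫⁻ s in Set.Iio (0:ℝ),
      (Set.indicator (Set.Icc ((1 - Real.sqrt γ) ^ 2) ((1 + Real.sqrt γ) ^ 2))
        (fun s => ENNReal.ofReal
          (Real.sqrt (((1 + Real.sqrt γ) ^ 2 - s) * (s - (1 - Real.sqrt γ) ^ 2)) /
            (2 * Real.pi * γ * s)))) s = 0 := by
    rw [MeasureTheory.setLIntegral_congr_fun measurableSet_Iio
      (fun s (hs : s < 0) => ?_), MeasureTheory.lintegral_zero]
    rw [Set.indicator_of_notMem]
    intro hmem
    have := hmem.1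
    nlinarith [sq_nonneg (1 - Real.sqrt γ)]
  rw [h2]
  simp

lemma integrable_one_div_MP (γ lam : ℝ) (hγ : 0 < γ) (hlam : 0 < lam) :
    Integrable (fun s => 1 / (s + lam)) (MP γ) := by
  refine (MP_core γ hγ (fun s => 1 / (s + lam)) (by fun_prop) (1/lam)
    (fun s hs => ?_)).1
  have hs0 : 0 ≤ s := le_trans (sq_nonneg _) hs.1
  rw [abs_of_nonneg (by positivity)]
  exact div_le_div_of_nonneg_left zero_le_one hlam (by linarith)

lemma integrable_one_div_sq_MP (γ lam : ℝ) (hγ : 0 < γ) (hlam : 0 < lam) :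
    Integrable (fun s => 1 / (s + lam) ^ 2) (MP γ) := by
  refine (MP_core γ hγ (fun s => 1 / (s + lam) ^ 2) (by fun_prop)
    (1/lam^2) (fun s hs => ?_)).1
  have hs0 : 0 ≤ s := le_trans (sq_nonneg _) hs.1
  rw [abs_of_nonneg (by positivity)]
  apply div_le_div_of_nonneg_left zero_le_one (by positivity)
  nlinarith

lemma hasDerivAt_vfun (γ lam : ℝ) (hγ : 0 < γ) (hlam : 0 < lam) :
    HasDerivAt (fun x => ∫ s, 1 / (s + x) ∂(MP γ))
      (- ∫ s, 1 / (s + lam) ^ 2 ∂(MP γ)) lam := by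
  have key := hasDerivAt_integral_of_dominated_loc_of_deriv_le (μ := MP γ) (x₀ := lam)
    (F := fun x s => 1 / (s + x)) (F' := fun x s => -(1 / (s + x) ^ 2))
    (bound := fun s => 1 / (s + lam / 2) ^ 2) (Metric.ball_mem_nhds lam (half_pos hlam))
    (Filter.Eventually.of_forall (fun x =>
      (measurable_const.div (measurable_id.add measurable_const)).aestronglyMeasurable))
    (integrable_one_div_MP γ lam hγ hlam)
    ((measurable_const.div ((measurable_id.add measurable_const).pow_const 2)).neg.aestronglyMeasurable)
    ?_ ?_ ?_
  · have : ∫ s, -(1 / (s + lam) ^ 2) ∂(MP γ) = - ∫ s, 1 / (s + lam) ^ 2 ∂(MP γ) :=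
      integral_neg _
    rw [this] at key
    exact key.2
  · -- bound
    filter_upwards [MP_ae_nonneg γ hγ] with s hs x hx
    rw [Metric.mem_ball, Real.dist_eq] at hx
    have hx2 : lam / 2 < x := by cases abs_lt.mp hx; linarith
    have h1 : 0 < s + lam / 2 := by linarith
    have h2 : 0 < s + x := by linarith
    rw [norm_neg, Real.norm_eq_abs, abs_of_nonneg (by positivity)]
    apply div_le_div_of_nonneg_left zero_le_one (by positivity)
    nlinarith
  · -- bound integrable
    refine (MP_core γ hγ (fun s => 1 / (s + lam / 2) ^ 2) (by fun_prop)
      (1/(lam/2)^2) (fun s hs => ?_)).1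
    have hs0 : 0 ≤ s := le_trans (sq_nonneg _) hs.1
    have h1 : 0 < s + lam / 2 := by linarith
    rw [abs_of_nonneg (by positivity)]
    apply div_le_div_of_nonneg_left zero_le_one (by positivity)
    nlinarith
  · -- differentiability
    filter_upwards [MP_ae_nonneg γ hγ] with s hs x hx
    rw [Metric.mem_ball, Real.dist_eq] at hx
    have hx2 : lam / 2 < x := by cases abs_lt.mp hx; linarith
    have h2 : s + x ≠ 0 := by intro h; nlinarith
    have := (hasDerivAt_inv h2).comp x ((hasDerivAt_id x).const_add s)
    simpa [one_div, neg_div, Function.comp_def] using this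

lemma Vf_facts (γ lam : ℝ) (hγ : 0 < γ) (hlam : 0 < lam) :
    0 < Vf γ lam ∧ lam * Vf γ lam < 1 ∧
    γ * lam * (Vf γ lam) ^ 2 + (lam + 1 - γ) * Vf γ lam = 1 ∧
    0 < 2 * γ * lam * Vf γ lam + (lam + 1 - γ) := by
  have hΔ : 0 < (lam + 1 - γ) ^ 2 + 4 * γ * lam := by nlinarith [sq_nonneg (lam + 1 - γ)]
  set d := Real.sqrt ((lam + 1 - γ) ^ 2 + 4 * γ * lam) with hddef
  have hd2 : d ^ 2 = (lam + 1 - γ) ^ 2 + 4 * γ * lam := Real.sq_sqrt hΔ.le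
  have hd0 : 0 < d := Real.sqrt_pos.mpr hΔ
  have habs : |lam + 1 - γ| < d := by
    rw [← Real.sqrt_sq_eq_abs, hddef]
    exact Real.sqrt_lt_sqrt (sq_nonneg _) (by nlinarith)
  have hlt : d < lam + 1 + γ := by
    rw [hddef, show lam + 1 + γ = Real.sqrt ((lam + 1 + γ) ^ 2) from
      (Real.sqrt_sq (by linarith)).symm]
    exact Real.sqrt_lt_sqrt hΔ.le (by nlinarith)
  have hnum : 0 < d - (lam + 1 - γ) := by
    have := neg_abs_le (lam + 1 - γ)
    have := le_abs_self (lam + 1 - γ)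
    linarith
  have hv0 : 0 < Vf γ lam := div_pos hnum (by positivity)
  have hQ : γ * lam * (Vf γ lam) ^ 2 + (lam + 1 - γ) * Vf γ lam = 1 := by
    rw [Vf, ← hddef]
    field_simp
    linear_combination hd2
  have hu1 : lam * Vf γ lam < 1 := by
    have heq : lam * Vf γ lam = (d - (lam + 1 - γ)) / (2 * γ) := by
      rw [Vf, ← hddef]
      field_simp
    rw [heq, div_lt_one (by linarith)]
    linarith
  have hDeq : 2 * γ * lam * Vf γ lam + (lam + 1 - γ) = d := by
    rw [Vf, ← hddef]
    field_simp
    ring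
  exact ⟨hv0, hu1, hQ, by rw [hDeq]; exact hd0⟩

lemma I2_rel (γ lam : ℝ) (hγ : 0 < γ) (hlam : 0 < lam) :
    (∫ s, 1 / (s + lam) ^ 2 ∂(MP γ)) * (2 * γ * lam * Vf γ lam + (lam + 1 - γ))
      = γ * (Vf γ lam) ^ 2 + Vf γ lam := by
  set I2 := ∫ s, 1 / (s + lam) ^ 2 ∂(MP γ) with hI2def
  have hv' := hasDerivAt_vfun γ lam hγ hlam
  have hev : (fun x => ∫ s, 1 / (s + x) ∂(MP γ)) =ᶠ[nhds lam] (fun x => Vf γ x) :=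
    Filter.eventuallyEq_of_mem (isOpen_Ioi.mem_nhds hlam) (fun x hx => stieltjes γ x hγ hx)
  have hv'2 : HasDerivAt (fun x => Vf γ x) (-I2) lam := hv'.congr_of_eventuallyEq hev.symm
  have t1 : HasDerivAt (fun x : ℝ => γ * x) γ lam := by
    simpa using (hasDerivAt_id lam).const_mul γ
  have t2 : HasDerivAt (fun x => (Vf γ x) ^ 2) (2 * Vf γ lam * (-I2)) lam := by
    simpa using hv'2.fun_pow 2
  have t3 := t1.mul t2
  have t4 : HasDerivAt (fun x : ℝ => x + 1 - γ) 1 lam := by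
    simpa using ((hasDerivAt_id lam).add_const 1).sub_const γ
  have t5 := t4.mul hv'2
  have hg := t3.add t5
  have hconst : (fun x => γ * x * (Vf γ x) ^ 2 + (x + 1 - γ) * Vf γ x)
      =ᶠ[nhds lam] (fun _ => (1:ℝ)) :=
    Filter.eventuallyEq_of_mem (isOpen_Ioi.mem_nhds hlam)
      (fun x hx => (Vf_facts γ x hγ hx).2.2.1)
  have h0 : HasDerivAt (fun _ : ℝ => (1:ℝ))
      (γ * (Vf γ lam) ^ 2 + γ * lam * (2 * Vf γ lam * (-I2))
        + (1 * Vf γ lam + (lam + 1 - γ) * (-I2))) lam :=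
    hg.congr_of_eventuallyEq hconst.symm
  have hzero := h0.unique (hasDerivAt_const lam 1)
  linear_combination -hzero

lemma E_eq (γ lam : ℝ) (hγ : 0 < γ) (hlam : 0 < lam) :
    ∫ s, s / (s + lam) ^ 2 ∂(MP γ)
      = Vf γ lam - lam * ∫ s, 1 / (s + lam) ^ 2 ∂(MP γ) := by
  have hcong : (fun s => s / (s + lam) ^ 2)
      =ᵐ[MP γ] (fun s => 1 / (s + lam) - lam * (1 / (s + lam) ^ 2)) := by
    filter_upwards [MP_ae_nonneg γ hγ] with s hs
    have h0 : 0 < s + lam := by linarith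
    field_simp
    ring
  rw [integral_congr_ae hcong,
    integral_sub (integrable_one_div_MP γ lam hγ hlam)
      ((integrable_one_div_sq_MP γ lam hγ hlam).const_mul lam),
    integral_const_mul, stieltjes γ lam hγ hlam]

lemma per_gamma (γ lam τ : ℝ) (hγ : 0 < γ) (hlam : 0 < lam)
    (hfp : lam ^ 2 * ∫ s, 1 / (s + lam) ^ 2 ∂(MP γ) = τ) :
    ∃ t : ℝ, 0 < t ∧ t < 1 ∧ γ * t < 1 ∧ τ * (1 - γ * t ^ 2) = (1 - t) ^ 2 ∧
      (∫ s, s / (s + lam) ^ 2 ∂(MP γ)) * (1 - γ * t ^ 2) = t ^ 2 := by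
  obtain ⟨hv0, hu1, hQ, hD0⟩ := Vf_facts γ lam hγ hlam
  set v := Vf γ lam with hvdef
  set I2 := ∫ s, 1 / (s + lam) ^ 2 ∂(MP γ) with hI2def
  set D := 2 * γ * lam * v + (lam + 1 - γ) with hDdef
  have hID : I2 * D = γ * v ^ 2 + v := I2_rel γ lam hγ hlam
  have hE : ∫ s, s / (s + lam) ^ 2 ∂(MP γ) = v - lam * I2 := E_eq γ lam hγ hlam
  refine ⟨1 - lam * v, by linarith, by nlinarith [mul_pos hlam hv0], ?_, ?_, ?_⟩
  · -- γ * (1 - lam*v) < 1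
    have hfact : v * (γ * lam * v + (1 - γ)) = 1 - lam * v := by linear_combination hQ
    nlinarith [hfact, hv0, hu1]
  · -- τ identity
    have e1 : (γ * v ^ 2 + v) * (1 - γ * (1 - lam * v) ^ 2)
        = v ^ 2 * D := by
      rw [hDdef]
      linear_combination (v * (γ * (1 - lam * v) - 1)) * hQ
    have hcancel : (τ * (1 - γ * (1 - lam * v) ^ 2) - (1 - (1 - lam * v)) ^ 2) * D = 0 := by
      linear_combination (-(1 - γ * (1 - lam * v) ^ 2) * D) * hfp
        + lam ^ 2 * (1 - γ * (1 - lam * v) ^ 2) * hID + lam ^ 2 * e1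
    rcases mul_eq_zero.mp hcancel with h | h
    · linarith
    · exfalso; rw [h] at hD0; exact lt_irrefl 0 hD0
  · -- E identity
    have e1 : (γ * v ^ 2 + v) * (1 - γ * (1 - lam * v) ^ 2)
        = v ^ 2 * D := by
      rw [hDdef]
      linear_combination (v * (γ * (1 - lam * v) - 1)) * hQ
    have e2 : v * (1 - γ * (1 - lam * v) ^ 2) - lam * v ^ 2 = (1 - lam * v) ^ 2 := by
      linear_combination (1 - lam * v) * hQ
    have hcancel : ((v - lam * I2) * (1 - γ * (1 - lam * v) ^ 2) - (1 - lam * v) ^ 2) * D = 0 := by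
      linear_combination (- lam * (1 - γ * (1 - lam * v) ^ 2)) * hID - lam * e1 + D * e2
    rw [hE]
    rcases mul_eq_zero.mp hcancel with h | h
    · linarith
    · exfalso; rw [h] at hD0; exact lt_irrefl 0 hD0

set_option maxHeartbeats 2000000 in
theorem stmt16 (τ : ℝ) (hτ0 : 0 < τ) (hτ1 : τ ≤ 1)
    (γ₁ γ₂ lam₁ lam₂ : ℝ) (hγ1 : 0 < γ₁) (hγ12 : γ₁ < γ₂)
    (hl1 : 0 < lam₁) (hl2 : 0 < lam₂)
    (hfp1 : lam₁ ^ 2 * ∫ s, 1 / (s + lam₁) ^ 2 ∂(MP γ₁) = τ)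
    (hfp2 : lam₂ ^ 2 * ∫ s, 1 / (s + lam₂) ^ 2 ∂(MP γ₂) = τ) :
    (∫ s, s / (s + lam₁) ^ 2 ∂(MP γ₁)) < ∫ s, s / (s + lam₂) ^ 2 ∂(MP γ₂) := by
  have hγ2 : 0 < γ₂ := lt_trans hγ1 hγ12
  obtain ⟨t₁, ht10, ht11, hγt1, hτ1', hE1⟩ := per_gamma γ₁ lam₁ τ hγ1 hl1 hfp1
  obtain ⟨t₂, ht20, ht21, hγt2, hτ2', hE2⟩ := per_gamma γ₂ lam₂ τ hγ2 hl2 hfp2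
  set E₁ := ∫ s, s / (s + lam₁) ^ 2 ∂(MP γ₁) with hE₁def
  set E₂ := ∫ s, s / (s + lam₂) ^ 2 ∂(MP γ₂) with hE₂def
  have h1t1 : 0 < (1 - t₁) ^ 2 := pow_pos (by linarith) 2
  have h1t2 : 0 < (1 - t₂) ^ 2 := pow_pos (by linarith) 2
  have hM1 : 0 < 1 - γ₁ * t₁ ^ 2 := by nlinarith [h1t1, hτ0, hτ1']
  have hM2 : 0 < 1 - γ₂ * t₂ ^ 2 := by nlinarith [h1t2, hτ0, hτ2']
  -- t_j < 1 - τ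
  have hkey1 : 0 < (1 - t₁) * t₁ * (1 - γ₁ * t₁) :=
    mul_pos (mul_pos (by linarith) ht10) (by linarith)
  have hkey2 : 0 < (1 - t₂) * t₂ * (1 - γ₂ * t₂) :=
    mul_pos (mul_pos (by linarith) ht20) (by linarith)
  have ht1τ : τ < 1 - t₁ := by nlinarith [hkey1, hτ1', hM1]
  have ht2τ : τ < 1 - t₂ := by nlinarith [hkey2, hτ2', hM2]
  -- gamma identities
  have hg1 : γ₁ * (τ * t₁ ^ 2) = τ - (1 - t₁) ^ 2 := by linear_combination -hτ1'
  have hg2 : γ₂ * (τ * t₂ ^ 2) = τ - (1 - t₂) ^ 2 := by linear_combination -hτ2'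
  -- monotonicity: t₁ < t₂
  have ht12 : t₁ < t₂ := by
    by_contra h
    push_neg at h
    have hfac : 0 ≤ (t₁ - t₂) * ((1 - τ) * (t₁ + t₂) - 2 * t₁ * t₂) := by
      apply mul_nonneg (by linarith)
      nlinarith [mul_pos ht10 (show 0 < 1 - τ - t₂ by linarith),
        mul_pos ht20 (show 0 < 1 - τ - t₁ by linarith)]
    have hcross : (τ - (1 - t₂) ^ 2) * t₁ ^ 2 ≤ (τ - (1 - t₁) ^ 2) * t₂ ^ 2 := by
      nlinarith [hfac]
    have hc1 : γ₂ * (τ * t₂ ^ 2) * t₁ ^ 2 ≤ γ₁ * (τ * t₁ ^ 2) * t₂ ^ 2 := by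
      rw [hg1, hg2]; exact hcross
    nlinarith [hc1, mul_pos (mul_pos hτ0 (pow_pos ht20 2)) (pow_pos ht10 2), hγ12]
  -- E identities in terms of t
  have hE1' : E₁ * (1 - t₁) ^ 2 = τ * t₁ ^ 2 := by
    have h := mul_right_cancel₀ (ne_of_gt hM1)
      (show E₁ * (1 - t₁) ^ 2 * (1 - γ₁ * t₁ ^ 2) = τ * t₁ ^ 2 * (1 - γ₁ * t₁ ^ 2) by
        linear_combination (1 - t₁) ^ 2 * hE1 - t₁ ^ 2 * hτ1')
    exact h
  have hE2' : E₂ * (1 - t₂) ^ 2 = τ * t₂ ^ 2 := by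
    have h := mul_right_cancel₀ (ne_of_gt hM2)
      (show E₂ * (1 - t₂) ^ 2 * (1 - γ₂ * t₂ ^ 2) = τ * t₂ ^ 2 * (1 - γ₂ * t₂ ^ 2) by
        linear_combination (1 - t₂) ^ 2 * hE2 - t₂ ^ 2 * hτ2')
    exact h
  -- conclude
  have hstep : t₁ * (1 - t₂) < t₂ * (1 - t₁) := by nlinarith [ht12]
  have hsq : (t₁ * (1 - t₂)) ^ 2 < (t₂ * (1 - t₁)) ^ 2 := by
    nlinarith [hstep, mul_pos ht10 (show 0 < 1 - t₂ by linarith),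
      mul_pos ht20 (show 0 < 1 - t₁ by linarith)]
  have h2 : τ * (t₁ * (1 - t₂)) ^ 2 < τ * (t₂ * (1 - t₁)) ^ 2 :=
    (mul_lt_mul_iff_right₀ hτ0).mpr hsq
  have hposfac : 0 < (1 - t₁) ^ 2 * (1 - t₂) ^ 2 := mul_pos h1t1 h1t2
  have k1 : E₁ * ((1 - t₁) ^ 2 * (1 - t₂) ^ 2) = τ * (t₁ * (1 - t₂)) ^ 2 := by
    linear_combination (1 - t₂) ^ 2 * hE1'
  have k2 : E₂ * ((1 - t₁) ^ 2 * (1 - t₂) ^ 2) = τ * (t₂ * (1 - t₁)) ^ 2 := by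
    linear_combination (1 - t₁) ^ 2 * hE2'
  have hfin : E₁ * ((1 - t₁) ^ 2 * (1 - t₂) ^ 2) < E₂ * ((1 - t₁) ^ 2 * (1 - t₂) ^ 2) := by
    rw [k1, k2]; exact h2
  exact (mul_lt_mul_iff_left₀ hposfac).mp hfin
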